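/- arXiv:2401.06501 — 2 statements merged into one kernel-verified Lean document; each statement's English description precedes it below -/
import Mathlib

section
/- For every r ∈ ℕ with r·k₁ ≤ t₁ and all x, y ∈ ℂ, 𝓕₂⁽¹⁾(a, b₁ + r, b₂; c₁, c₂; t₁, t₂, k₁, k₂, x, y) = Σ_{s=0}^{r} binom(r,s) · ((a)_s (−1)^{s k₁} (−t₁)_{s k₁} / (c₁)_s) · x^s · 𝓕₂⁽¹⁾(a + s, b₁ + s, b₂; c₁ + s, c₂; t₁ − s k₁, t₂, k₁, k₂, x, y). -/
open Complex Finset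

/-- Ascending Pochhammer symbol `(z)_j = z (z+1) ⋯ (z+j−1)`, with `(z)_0 = 1`. -/
noncomputable def poch (z : ℂ) (j : ℕ) : ℂ := (ascPochhammer ℂ j).eval z

/-- The first discrete Appell function `𝓕₂⁽¹⁾(a,b₁,b₂;c₁,c₂;t₁,t₂,k₁,k₂,x,y)`.
Since `(−t₁)_{m k₁} = 0` once `m k₁ > t₁` and `(−t₂)_{n k₂} = 0` once `n k₂ > t₂`
(for `k₁, k₂ ≥ 1`), the doubly infinite sum reduces to this finite sum. -/
noncomputable def F2one (a b₁ b₂ c₁ c₂ : ℂ) (t₁ t₂ k₁ k₂ : ℕ) (x y : ℂ) : ℂ :=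
  ∑ m ∈ Finset.range (t₁ + 1), ∑ n ∈ Finset.range (t₂ + 1),
    poch a (m + n) * poch b₁ m * poch b₂ n * (-1 : ℂ) ^ (m * k₁) * poch (-(t₁ : ℂ)) (m * k₁)
      * (-1 : ℂ) ^ (n * k₂) * poch (-(t₂ : ℂ)) (n * k₂) * x ^ m * y ^ n
    / (poch c₁ m * poch c₂ n * (Nat.factorial m : ℂ) * (Nat.factorial n : ℂ))

lemma poch_zero (z : ℂ) : poch z 0 = 1 := by simp [poch]
lemma poch_succ_right (z : ℂ) (n : ℕ) : poch z (n+1) = poch z n * (z + n) := by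
  simp [poch, ascPochhammer_succ_eval]
lemma poch_succ_left (z : ℂ) (n : ℕ) : poch z (n+1) = z * poch (z+1) n := by
  simp [poch, ascPochhammer_succ_left, Polynomial.eval_comp]
lemma poch_add (z : ℂ) (p q : ℕ) : poch z (p+q) = poch z p * poch (z+p) q := by
  have h := congrArg (Polynomial.eval z) (ascPochhammer_mul (S := ℂ) p q)
  simpa [poch, Polynomial.eval_comp] using h.symm
lemma poch_neg_nat_eq_zero {u j : ℕ} (h : u < j) : poch (-(u:ℂ)) j = 0 :=
  ascPochhammer_eval_neg_coe_nat_of_lt h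
lemma poch_ne_zero {c : ℂ} (hc : ∀ n : ℕ, c ≠ -(n : ℂ)) (j : ℕ) : poch c j ≠ 0 := by
  induction j with
  | zero => simp [poch_zero]
  | succ j ih =>
    rw [poch_succ_right]
    refine mul_ne_zero ih ?_
    intro h
    exact hc j (by linear_combination h)

lemma key (r : ℕ) : ∀ (b : ℂ) (m : ℕ), poch (b + r) m
    = ∑ s ∈ range (m+1), (r.choose s : ℂ) * (m.choose s : ℂ) * (s.factorial : ℂ) * poch (b + s) (m - s) := by
  induction r with
  | zero =>
    intro b m
    rw [Finset.sum_eq_single 0]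
    · simp [poch]
    · intro s hs hs0
      simp [Nat.choose_eq_zero_of_lt (Nat.pos_of_ne_zero hs0)]
    · intro h; simp at h
  | succ r ih =>
    intro b m
    cases m with
    | zero => simp [poch_zero]
    | succ m =>
      have hL : poch (b + (r+1:ℕ)) (m+1) = poch (b + r) (m+1) + (m+1) * poch (b + (r+1:ℕ)) m := by
        have e : (b + ((r:ℕ)+1:ℕ) : ℂ) = b + (r:ℂ) + 1 := by push_cast; ring
        rw [e, poch_succ_right, poch_succ_left]
        ring
      rw [hL, Finset.sum_range_succ']
      have hsplit : ∑ s ∈ range (m+1),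
            ((r+1).choose (s+1) : ℂ) * ((m+1).choose (s+1) : ℂ) * ((s+1).factorial : ℂ) * poch (b + ((s+1:ℕ):ℂ)) (m+1-(s+1))
          = (∑ s ∈ range (m+1), (r.choose (s+1) : ℂ) * ((m+1).choose (s+1):ℂ) * ((s+1).factorial:ℂ) * poch (b + ((s+1:ℕ):ℂ)) (m+1-(s+1)))
            + ((m:ℂ)+1) * ∑ s ∈ range (m+1), (r.choose s : ℂ) * (m.choose s:ℂ) * (s.factorial:ℂ) * poch ((b+1) + s) (m - s) := by
        rw [Finset.mul_sum, ← Finset.sum_add_distrib]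
        refine Finset.sum_congr rfl ?_
        intro s _
        have hps : (((r+1).choose (s+1) : ℕ) : ℂ) = (r.choose s : ℂ) + (r.choose (s+1) : ℂ) := by
          rw [Nat.choose_succ_succ']; push_cast; ring
        have hcfn : (m+1).choose (s+1) * (s+1).factorial = (m+1) * (m.choose s * s.factorial) := by
          rw [Nat.factorial_succ, ← mul_assoc, ← Nat.add_one_mul_choose_eq]
          ring
        have hcf : ((m+1).choose (s+1) : ℂ) * ((s+1).factorial : ℂ) = ((m:ℂ)+1) * ((m.choose s : ℂ) * (s.factorial : ℂ)) := by
          exact_mod_cast congrArg (Nat.cast : ℕ → ℂ) hcfn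
        have harg : (b + ((s+1:ℕ):ℂ)) = (b+1) + s := by push_cast; ring
        have hms : m + 1 - (s + 1) = m - s := by omega
        rw [hps, harg, hms]
        linear_combination ((r.choose s : ℂ) * poch (b + 1 + (s:ℂ)) (m - s)) * hcf
      rw [hsplit]
      have e1 : poch (b + (r:ℂ)) (m+1)
          = (∑ s ∈ range (m+1), (r.choose (s+1) : ℂ) * ((m+1).choose (s+1):ℂ) * ((s+1).factorial:ℂ) * poch (b + ((s+1:ℕ):ℂ)) (m+1-(s+1)))
            + ((r+1).choose 0 : ℂ) * ((m+1).choose 0 : ℂ) * ((Nat.factorial 0 : ℕ) : ℂ) * poch (b + ((0:ℕ):ℂ)) (m+1-0) := by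
        rw [ih b (m+1), Finset.sum_range_succ']
        congr 1
        simp
      have e2 : poch (b + ((r:ℕ)+1:ℕ)) m
          = ∑ s ∈ range (m+1), (r.choose s : ℂ) * (m.choose s:ℂ) * (s.factorial:ℂ) * poch ((b+1) + s) (m - s) := by
        have harg : (b + ((r:ℕ)+1:ℕ) : ℂ) = (b+1) + (r:ℂ) := by push_cast; ring
        rw [harg, ih (b+1) m]
      rw [← e2]
      linear_combination e1

noncomputable def Tt (a b₁ b₂ c₁ c₂ : ℂ) (t₁ t₂ k₁ k₂ r : ℕ) (x y : ℂ) (s m n : ℕ) : ℂ :=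
  (r.choose s : ℂ) * ((m.choose s : ℂ) * (s.factorial : ℂ) * poch (b₁ + s) (m - s)) *
    poch a (m + n) * poch b₂ n * (-1 : ℂ) ^ (m * k₁) * poch (-(t₁ : ℂ)) (m * k₁)
    * (-1 : ℂ) ^ (n * k₂) * poch (-(t₂ : ℂ)) (n * k₂) * x ^ m * y ^ n
  / (poch c₁ m * poch c₂ n * (Nat.factorial m : ℂ) * (Nat.factorial n : ℂ))

lemma term_eq (a b₁ b₂ c₁ c₂ : ℂ) (t₁ t₂ k₁ k₂ r : ℕ) (x y : ℂ)
    (hc₁ : ∀ n : ℕ, c₁ ≠ -(n : ℂ)) (hc₂ : ∀ n : ℕ, c₂ ≠ -(n : ℂ))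
    (s u n : ℕ) (hs : s * k₁ ≤ t₁) :
    Tt a b₁ b₂ c₁ c₂ t₁ t₂ k₁ k₂ r x y s (s+u) n
      = (r.choose s : ℂ) * (poch a s * (-1 : ℂ) ^ (s * k₁) * poch (-(t₁ : ℂ)) (s * k₁) /
            poch c₁ s) * x ^ s *
        (poch (a+s) (u + n) * poch (b₁+s) u * poch b₂ n * (-1 : ℂ) ^ (u * k₁)
          * poch (-((t₁ - s*k₁ : ℕ) : ℂ)) (u * k₁)
          * (-1 : ℂ) ^ (n * k₂) * poch (-(t₂ : ℂ)) (n * k₂) * x ^ u * y ^ n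
          / (poch (c₁+s) u * poch c₂ n * (Nat.factorial u : ℂ) * (Nat.factorial n : ℂ))) := by
  have hms : s + u - s = u := by omega
  have hpa : poch a (s + u + n) = poch a s * poch (a + s) (u + n) := by
    rw [show s + u + n = s + (u + n) by omega, poch_add]
  have hpt : poch (-(t₁:ℂ)) ((s+u)*k₁)
      = poch (-(t₁:ℂ)) (s*k₁) * poch (-((t₁ - s*k₁ : ℕ):ℂ)) (u*k₁) := by
    rw [show (s+u)*k₁ = s*k₁ + (u*k₁) by ring, poch_add]
    congr 2
    push_cast [Nat.cast_sub hs]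
    ring
  have hpc : poch c₁ (s+u) = poch c₁ s * poch (c₁ + s) u := poch_add c₁ s u
  have hfacn : (s+u).choose s * s.factorial * u.factorial = (s+u).factorial := by
    have := Nat.choose_mul_factorial_mul_factorial (Nat.le_add_right s u)
    simpa [hms] using this
  have h6 : (Nat.factorial u : ℂ) ≠ 0 := by exact_mod_cast u.factorial_ne_zero
  have hfac : ((s+u).choose s : ℂ) * (s.factorial : ℂ) = ((s+u).factorial : ℂ) / (u.factorial : ℂ) := by
    rw [eq_div_iff h6]
    exact_mod_cast congrArg (Nat.cast : ℕ → ℂ) hfacn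
  have hsign : (-1 : ℂ) ^ ((s+u)*k₁) = (-1:ℂ)^(s*k₁) * (-1:ℂ)^(u*k₁) := by
    rw [show (s+u)*k₁ = s*k₁ + u*k₁ by ring, pow_add]
  have hx : (x : ℂ) ^ (s+u) = x^s * x^u := pow_add x s u
  have h1 : poch c₁ s ≠ 0 := poch_ne_zero hc₁ s
  have h2 : poch (c₁ + s) u ≠ 0 := by
    refine poch_ne_zero (fun n hn => hc₁ (n + s) ?_) u
    push_cast
    linear_combination hn
  have h3 : poch c₂ n ≠ 0 := poch_ne_zero hc₂ n
  have h4 : ((s+u).choose s : ℂ) ≠ 0 := by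
    exact_mod_cast Nat.cast_ne_zero.mpr (Nat.choose_pos (Nat.le_add_right s u)).ne'
  have h5 : (s.factorial : ℂ) ≠ 0 := by exact_mod_cast s.factorial_ne_zero
  have h7 : (n.factorial : ℂ) ≠ 0 := by exact_mod_cast n.factorial_ne_zero
  rw [Tt, hms, hpa, hpt, hpc, hfac, hsign, hx]
  have h8 : ((s+u).factorial : ℂ) ≠ 0 := by exact_mod_cast (s+u).factorial_ne_zero
  simp only [div_eq_mul_inv, mul_inv]
  linear_combination ((r.choose s : ℂ) * poch (b₁ + (s:ℂ)) u * poch a s * poch (a + (s:ℂ)) (u + n) * poch b₂ n * poch (-(t₁:ℂ)) (s * k₁) * poch (-((t₁ - s*k₁ : ℕ):ℂ)) (u * k₁) * poch (-(t₂:ℂ)) (n * k₂) * x ^ s * x ^ u * y ^ n * ((u.factorial : ℂ))⁻¹ * (poch c₁ s)⁻¹ * (poch (c₁ + (s:ℂ)) u)⁻¹ * (poch c₂ n)⁻¹ * ((n.factorial : ℂ))⁻¹ * (-1:ℂ) ^ (s * k₁) * (-1:ℂ) ^ (u * k₁) * (-1:ℂ) ^ (n * k₂)) * (mul_inv_cancel₀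 h8)

/-- The finite summation formula (paper's (5.1)):
`𝓕₂⁽¹⁾(a, b₁+r, b₂; c₁, c₂; t₁, t₂, k₁, k₂, x, y)
 = Σ_{s=0}^{r} C(r,s) ((a)_s (−1)^{s k₁} (−t₁)_{s k₁} / (c₁)_s) x^s ·
   𝓕₂⁽¹⁾(a+s, b₁+s, b₂; c₁+s, c₂; t₁−s k₁, t₂, k₁, k₂, x, y)` for `r k₁ ≤ t₁`. -/
theorem finite_summation_formula (a b₁ b₂ c₁ c₂ : ℂ) (k₁ k₂ : ℕ)
    (hk₁ : 0 < k₁) (hk₂ : 0 < k₂)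
    (hc₁ : ∀ n : ℕ, c₁ ≠ -(n : ℂ)) (hc₂ : ∀ n : ℕ, c₂ ≠ -(n : ℂ))
    (t₁ t₂ : ℕ) (r : ℕ) (hr : r * k₁ ≤ t₁) (x y : ℂ) :
    F2one a (b₁ + r) b₂ c₁ c₂ t₁ t₂ k₁ k₂ x y =
      ∑ s ∈ Finset.range (r + 1),
        (r.choose s : ℂ) * (poch a s * (-1 : ℂ) ^ (s * k₁) * poch (-(t₁ : ℂ)) (s * k₁) /
            poch c₁ s) * x ^ s *
          F2one (a + s) (b₁ + s) b₂ (c₁ + s) c₂ (t₁ - s * k₁) t₂ k₁ k₂ x y := by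
  have hrt : r ≤ t₁ := le_trans (Nat.le_mul_of_pos_right r hk₁) hr
  have L1 : F2one a (b₁ + r) b₂ c₁ c₂ t₁ t₂ k₁ k₂ x y
      = ∑ m ∈ range (t₁+1), ∑ n ∈ range (t₂+1), ∑ s ∈ range (t₁+1),
          Tt a b₁ b₂ c₁ c₂ t₁ t₂ k₁ k₂ r x y s m n := by
    rw [F2one]
    refine Finset.sum_congr rfl fun m hm => Finset.sum_congr rfl fun n hn => ?_
    have hm' : m + 1 ≤ t₁ + 1 := by simp only [mem_range] at hm; omega
    have hk2 : poch (b₁ + r) m = ∑ s ∈ range (t₁+1),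
        (r.choose s : ℂ) * (m.choose s : ℂ) * (s.factorial:ℂ) * poch (b₁+s) (m-s) := by
      rw [key r b₁ m]
      refine Finset.sum_subset (Finset.range_subset_range.mpr hm') ?_
      intro s hs hs2
      simp only [mem_range] at hs hs2
      have : m < s := by omega
      simp [Nat.choose_eq_zero_of_lt this]
    rw [hk2]
    simp only [Finset.mul_sum, Finset.sum_mul, Finset.sum_div]
    refine Finset.sum_congr rfl fun s hs => ?_
    rw [Tt]
    ring
  have L2 : F2one a (b₁ + r) b₂ c₁ c₂ t₁ t₂ k₁ k₂ x y
      = ∑ s ∈ range (t₁+1), ∑ m ∈ range (t₁+1), ∑ n ∈ range (t₂+1),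
          Tt a b₁ b₂ c₁ c₂ t₁ t₂ k₁ k₂ r x y s m n := by
    rw [L1]
    rw [show (∑ m ∈ range (t₁+1), ∑ n ∈ range (t₂+1), ∑ s ∈ range (t₁+1),
          Tt a b₁ b₂ c₁ c₂ t₁ t₂ k₁ k₂ r x y s m n)
        = ∑ m ∈ range (t₁+1), ∑ s ∈ range (t₁+1), ∑ n ∈ range (t₂+1),
          Tt a b₁ b₂ c₁ c₂ t₁ t₂ k₁ k₂ r x y s m n from
      Finset.sum_congr rfl fun m _ => Finset.sum_comm]
    exact Finset.sum_comm
  rw [L2]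
  -- restrict the s-range
  rw [show (∑ s ∈ range (t₁+1), ∑ m ∈ range (t₁+1), ∑ n ∈ range (t₂+1),
        Tt a b₁ b₂ c₁ c₂ t₁ t₂ k₁ k₂ r x y s m n)
      = ∑ s ∈ range (r+1), ∑ m ∈ range (t₁+1), ∑ n ∈ range (t₂+1),
        Tt a b₁ b₂ c₁ c₂ t₁ t₂ k₁ k₂ r x y s m n from by
    refine (Finset.sum_subset (Finset.range_subset_range.mpr (by omega)) ?_).symm
    intro s hs hs2
    simp only [mem_range] at hs hs2
    have hrs : r < s := by omega
    refine Finset.sum_eq_zero fun m _ => Finset.sum_eq_zero fun n _ => ?_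
    simp [Tt, Nat.choose_eq_zero_of_lt hrs]]
  refine Finset.sum_congr rfl fun s hs => ?_
  simp only [mem_range] at hs
  have hsr : s ≤ r := by omega
  have hsk : s * k₁ ≤ t₁ := le_trans (Nat.mul_le_mul_right k₁ hsr) hr
  have hss : s ≤ s * k₁ := Nat.le_mul_of_pos_right s hk₁
  -- restrict m to Ico s (t₁+1)
  have e1 : (∑ m ∈ range (t₁+1), ∑ n ∈ range (t₂+1),
        Tt a b₁ b₂ c₁ c₂ t₁ t₂ k₁ k₂ r x y s m n)
      = ∑ m ∈ Ico s (t₁+1), ∑ n ∈ range (t₂+1),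
        Tt a b₁ b₂ c₁ c₂ t₁ t₂ k₁ k₂ r x y s m n := by
    refine (Finset.sum_subset ?_ ?_).symm
    · intro m hm
      simp only [mem_Ico] at hm
      simp only [mem_range]
      omega
    · intro m hm hm2
      simp only [mem_range] at hm
      simp only [mem_Ico, not_and, not_le] at hm2
      have hms : m < s := by
        by_contra h
        exact absurd (hm2 (by omega)) (by omega)
      refine Finset.sum_eq_zero fun n _ => ?_
      simp [Tt, Nat.choose_eq_zero_of_lt hms]
  rw [e1, Finset.sum_Ico_eq_sum_range]
  -- now sum over u ∈ range (t₁ + 1 - s); shrink to range (t₁ - s*k₁ + 1)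
  have e2 : (∑ u ∈ range (t₁ + 1 - s), ∑ n ∈ range (t₂+1),
        Tt a b₁ b₂ c₁ c₂ t₁ t₂ k₁ k₂ r x y s (s + u) n)
      = ∑ u ∈ range (t₁ - s*k₁ + 1), ∑ n ∈ range (t₂+1),
        Tt a b₁ b₂ c₁ c₂ t₁ t₂ k₁ k₂ r x y s (s + u) n := by
    refine (Finset.sum_subset (Finset.range_subset_range.mpr (by omega)) ?_).symm
    intro u hu hu2
    simp only [mem_range] at hu hu2
    have huk : u ≤ u * k₁ := Nat.le_mul_of_pos_right u hk₁
    have hlt : t₁ < (s + u) * k₁ := by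
      have : (s + u) * k₁ = s * k₁ + u * k₁ := by ring
      omega
    refine Finset.sum_eq_zero fun n _ => ?_
    have hz : poch (-(t₁:ℂ)) ((s+u) * k₁) = 0 := poch_neg_nat_eq_zero hlt
    simp [Tt, hz]
  rw [e2, F2one, Finset.mul_sum]
  refine Finset.sum_congr rfl fun u hu => ?_
  rw [Finset.mul_sum]
  refine Finset.sum_congr rfl fun n hn => ?_
  exact term_eq a b₁ b₂ c₁ c₂ t₁ t₂ k₁ k₂ r x y hc₁ hc₂ s u n hsk
end

section
/- For every z ∈ ℂ with |z| < 1 and all x, y ∈ ℂ, the series Σ_{r=0}^{∞} ((a)_r / r!) z^r · 𝓕₂⁽¹⁾(a + r, b₁, b₂; c₁, c₂; t₁, t₂, k₁, k₂, x, y) converges and equals (1 − z)^{−a} · 𝓕₂⁽¹⁾(a, b₁, b₂; c₁, c₂; t₁, t₂, k₁, k₂, x/(1−z), y/(1−z)), where (1 − z)^{−a} is the principal complex power. -/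
open Complex Finset

lemma poch_add_s14 (u : ℂ) (i j : ℕ) : poch u (i + j) = poch u i * poch (u + i) j := by
  unfold poch
  rw [← ascPochhammer_mul]
  simp [Polynomial.eval_comp]

lemma poch_succ (u : ℂ) (n : ℕ) : poch u (n + 1) = poch u n * (u + n) := by
  unfold poch
  rw [ascPochhammer_succ_right]
  simp

lemma slit (u : ℂ) (hu : ‖u‖ < 1) : (1 - u) ∈ Complex.slitPlane := by
  rw [Complex.mem_slitPlane_iff]
  left
  simp only [Complex.sub_re, Complex.one_re]
  have := Complex.re_le_norm u
  linarith

lemma iter_deriv (w : ℂ) (n : ℕ) :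
    ∀ u : ℂ, ‖u‖ < 1 →
      iteratedDeriv n (fun v : ℂ => (1 - v) ^ (-w)) u = poch w n * (1 - u) ^ (-w - n) := by
  induction n with
  | zero => intro u hu; simp [poch]
  | succ n ih =>
    intro u hu
    rw [iteratedDeriv_succ]
    have hev : (iteratedDeriv n (fun v : ℂ => (1 - v) ^ (-w)))
        =ᶠ[nhds u] (fun v => poch w n * (1 - v) ^ (-w - n)) := by
      filter_upwards [Metric.isOpen_ball.mem_nhds (show u ∈ Metric.ball (0:ℂ) 1 by
        simpa [Metric.mem_ball, Complex.dist_eq] using hu)] with v hv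
      exact ih v (by simpa [Metric.mem_ball, Complex.dist_eq] using hv)
    rw [hev.deriv_eq]
    have h1 : HasDerivAt (fun v : ℂ => 1 - v) (-1) u := (hasDerivAt_id u).const_sub 1
    have h2 := (h1.cpow_const (c := -w - n) (slit u hu)).const_mul (poch w n)
    rw [h2.deriv]
    rw [poch_succ]
    have he : -w - (n:ℂ) - 1 = -w - (n+1 : ℕ) := by push_cast; ring
    rw [he]
    ring

lemma binom_series (w z : ℂ) (hz : ‖z‖ < 1) :
    HasSum (fun r : ℕ => poch w r / (Nat.factorial r : ℂ) * z ^ r) ((1 - z) ^ (-w)) := by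
  have hdiff : DifferentiableOn ℂ (fun v : ℂ => (1 - v) ^ (-w)) (Metric.ball 0 1) := by
    intro u hu
    have hu' : ‖u‖ < 1 := by simpa [Metric.mem_ball, Complex.dist_eq] using hu
    have h1 : HasDerivAt (fun v : ℂ => 1 - v) (-1) u := (hasDerivAt_id u).const_sub 1
    exact ((h1.cpow_const (c := -w) (slit u hu')).differentiableAt).differentiableWithinAt
  have hzball : z ∈ Metric.ball (0:ℂ) 1 := by simpa [Metric.mem_ball, Complex.dist_eq] using hz
  have H := Complex.hasSum_taylorSeries_on_ball hdiff hzball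
  simp only [sub_zero] at H
  convert H using 2 with r
  · rfl
  rw [iter_deriv w r 0 (by simp)]
  simp only [sub_zero, Complex.one_cpow, smul_eq_mul]
  ring

/-- The infinite summation formula (paper's (5.3)):
`Σ_{r≥0} ((a)_r/r!) z^r 𝓕₂⁽¹⁾(a+r, b₁, b₂; c₁, c₂; t₁, t₂, k₁, k₂, x, y)`
converges, with sum `(1−z)^{−a} 𝓕₂⁽¹⁾(a, b₁, b₂; c₁, c₂; t₁, t₂, k₁, k₂, x/(1−z), y/(1−z))`,
for `|z| < 1`. -/
theorem infinite_summation_formula (a b₁ b₂ c₁ c₂ : ℂ) (k₁ k₂ : ℕ)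
    (hk₁ : 0 < k₁) (hk₂ : 0 < k₂)
    (hc₁ : ∀ n : ℕ, c₁ ≠ -(n : ℂ)) (hc₂ : ∀ n : ℕ, c₂ ≠ -(n : ℂ))
    (t₁ t₂ : ℕ) (z : ℂ) (hz : ‖z‖ < 1) (x y : ℂ) :
    HasSum
      (fun r : ℕ =>
        poch a r / (Nat.factorial r : ℂ) * z ^ r *
          F2one (a + r) b₁ b₂ c₁ c₂ t₁ t₂ k₁ k₂ x y)
      ((1 - z) ^ (-a) *
        F2one a b₁ b₂ c₁ c₂ t₁ t₂ k₁ k₂ (x / (1 - z)) (y / (1 - z))) := by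
  have h0 : (1 : ℂ) - z ≠ 0 := by
    intro h
    rw [sub_eq_zero] at h
    rw [← h] at hz
    simp at hz
  have key : ∀ m n : ℕ, HasSum
      (fun r : ℕ => poch a r / (Nat.factorial r : ℂ) * z ^ r *
        (poch (a + r) (m + n) * poch b₁ m * poch b₂ n * (-1 : ℂ) ^ (m * k₁)
          * poch (-(t₁ : ℂ)) (m * k₁) * (-1 : ℂ) ^ (n * k₂) * poch (-(t₂ : ℂ)) (n * k₂)
          * x ^ m * y ^ n
          / (poch c₁ m * poch c₂ n * (Nat.factorial m : ℂ) * (Nat.factorial n : ℂ))))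
      ((1 - z) ^ (-a) *
        (poch a (m + n) * poch b₁ m * poch b₂ n * (-1 : ℂ) ^ (m * k₁)
          * poch (-(t₁ : ℂ)) (m * k₁) * (-1 : ℂ) ^ (n * k₂) * poch (-(t₂ : ℂ)) (n * k₂)
          * (x / (1 - z)) ^ m * (y / (1 - z)) ^ n
          / (poch c₁ m * poch c₂ n * (Nat.factorial m : ℂ) * (Nat.factorial n : ℂ)))) := by
    intro m n
    set A : ℂ := poch a (m + n) * poch b₁ m * poch b₂ n * (-1 : ℂ) ^ (m * k₁)
      * poch (-(t₁ : ℂ)) (m * k₁) * (-1 : ℂ) ^ (n * k₂) * poch (-(t₂ : ℂ)) (n * k₂)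
      * x ^ m * y ^ n
      / (poch c₁ m * poch c₂ n * (Nat.factorial m : ℂ) * (Nat.factorial n : ℂ)) with hA
    have H := (binom_series (a + ((m + n : ℕ) : ℂ)) z hz).mul_left A
    have hfun : (fun r : ℕ => A * (poch (a + ((m + n : ℕ) : ℂ)) r / (Nat.factorial r : ℂ) * z ^ r))
        = (fun r : ℕ => poch a r / (Nat.factorial r : ℂ) * z ^ r *
          (poch (a + r) (m + n) * poch b₁ m * poch b₂ n * (-1 : ℂ) ^ (m * k₁)
            * poch (-(t₁ : ℂ)) (m * k₁) * (-1 : ℂ) ^ (n * k₂) * poch (-(t₂ : ℂ)) (n * k₂)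
            * x ^ m * y ^ n
            / (poch c₁ m * poch c₂ n * (Nat.factorial m : ℂ) * (Nat.factorial n : ℂ)))) := by
      funext r
      have hp : poch a (m + n) * poch (a + ((m + n : ℕ) : ℂ)) r
          = poch a r * poch (a + (r : ℂ)) (m + n) := by
        rw [← poch_add_s14, ← poch_add_s14, add_comm (m + n) r]
      rw [hA]
      linear_combination (poch b₁ m * poch b₂ n * (-1 : ℂ) ^ (m * k₁)
        * poch (-(t₁ : ℂ)) (m * k₁) * (-1 : ℂ) ^ (n * k₂) * poch (-(t₂ : ℂ)) (n * k₂)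
        * x ^ m * y ^ n * z ^ r
        / (poch c₁ m * poch c₂ n * (Nat.factorial m : ℂ) * (Nat.factorial n : ℂ)
          * (Nat.factorial r : ℂ))) * hp
    have hval : A * (1 - z) ^ (-(a + ((m + n : ℕ) : ℂ)))
        = (1 - z) ^ (-a) *
          (poch a (m + n) * poch b₁ m * poch b₂ n * (-1 : ℂ) ^ (m * k₁)
            * poch (-(t₁ : ℂ)) (m * k₁) * (-1 : ℂ) ^ (n * k₂) * poch (-(t₂ : ℂ)) (n * k₂)
            * (x / (1 - z)) ^ m * (y / (1 - z)) ^ n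
            / (poch c₁ m * poch c₂ n * (Nat.factorial m : ℂ) * (Nat.factorial n : ℂ))) := by
      rw [show -(a + ((m + n : ℕ) : ℂ)) = -a + -((m + n : ℕ) : ℂ) by ring,
        Complex.cpow_add _ _ h0, Complex.cpow_neg (1 - z) ((m + n : ℕ) : ℂ), Complex.cpow_natCast, hA,
        div_pow, div_pow, pow_add]
      ring
    rw [hfun, hval] at H
    exact H
  have main := hasSum_sum (s := Finset.range (t₁ + 1))
    (fun m _ => hasSum_sum (s := Finset.range (t₂ + 1)) (fun n _ => key m n))
  convert main using 1
  · funext r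
    simp only [F2one, Finset.mul_sum]
  · simp only [F2one, Finset.mul_sum]
end
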